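/- Let R be a commutative ring equipped with an exhaustive Γ-filtration FR = {F_γR}_{γ∈Γ}, where Γ is a totally ordered monoid, and set R₀ = F₀R. Let I be an ideal of R⟨X⟩ = R⟨X₁,...,Xₙ⟩ generated by a subset G ⊆ R₀⟨X⟩ which is a monic Gröbner basis of I in R⟨X⟩ with respect to a monomial ordering ≺ on B_R, with LM(g) ≠ 1 for every g ∈ G, and endow A = R⟨X⟩/I with the Γ-filtration FA given by F_γA = { Σ_i λ_i w̄_i : λ_i ∈ F_γR, w̄_i ∈ N̄(G) }. If the filtration FR of R is separated, then FA is separated: for every nonzero a ∈ A there is γ ∈ Γ with a ∈ F_γA − F_{<γ}A, where F_{<γ}A = ∪_{γ'<γ} F_{γ'}A. In particular, if 1 ∈ F₀R − F_{<0}R then 1 ∈ F₀A − F_{<0}A. -/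

import Mathlib

open scoped Classical

/-- Words in the alphabet `X₁,...,Xₙ`: the standard basis `B` of monomials of the free algebra. -/
abbrev Word (n : ℕ) : Type := FreeMonoid (Fin n)

/-- The free `R`-algebra `R⟨X₁,...,Xₙ⟩`, realized as the monoid algebra on words. -/
abbrev FreeAlg (R : Type) [CommRing R] (n : ℕ) : Type := MonoidAlgebra R (Word n)

/-- `v` divides `u` as words: `u = w * v * s` for some words `w, s`. -/
def WordDvd {n : ℕ} (v u : Word n) : Prop := ∃ w s : Word n, u = w * v * s

/-- A monomial ordering on the words in `X₁,...,Xₙ`: a well-ordering `≺` such that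
(M1) `u ≺ v` implies `w*u*s ≺ w*v*s`, and (M2) `w = u*v` implies `u ⪯ w` and `v ⪯ w`. -/
structure MonomialOrdering (n : ℕ) where
  lt : Word n → Word n → Prop
  strictTotal : IsStrictTotalOrder (Word n) lt
  wellFounded : WellFounded lt
  mul_compat : ∀ w u v s : Word n, lt u v → lt (w * u * s) (w * v * s)
  factor_le : ∀ u v : Word n, ¬ lt (u * v) u ∧ ¬ lt (u * v) v

namespace MonomialOrdering

/-- `u ⪯ v` for a monomial ordering. -/
def le {n : ℕ} (o : MonomialOrdering n) (u v : Word n) : Prop := u = v ∨ o.lt u v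

end MonomialOrdering

/-- The leading monomial `LM(f)` of `f`: the `≺`-greatest word occurring in `f`
(with junk value `1` if `f = 0`). -/
noncomputable def LM {R : Type} [CommRing R] {n : ℕ} (o : MonomialOrdering n)
    (f : FreeAlg R n) : Word n :=
  if h : ∃ w, w ∈ f.coeff.support ∧ ∀ u ∈ f.coeff.support, o.le u w then h.choose else 1

/-- The leading coefficient `LC(f)` of `f`: the coefficient of `LM(f)` in `f`. -/
noncomputable def LC {R : Type} [CommRing R] {n : ℕ} (o : MonomialOrdering n)
    (f : FreeAlg R n) : R := f.coeff (LM o f)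

/-- A subset `G` is monic if every `g ∈ G` is nonzero with leading coefficient `1`. -/
def IsMonicSet {R : Type} [CommRing R] {n : ℕ} (o : MonomialOrdering n)
    (G : Set (FreeAlg R n)) : Prop := ∀ g ∈ G, g ≠ 0 ∧ LC o g = 1

/-- `G` is a monic Gröbner basis of the two-sided ideal `I`: a monic subset of `I` such that
the leading monomial of every nonzero `f ∈ I` is divisible by `LM(g)` for some `g ∈ G`. -/
def IsMonicGB {R : Type} [CommRing R] {n : ℕ} (o : MonomialOrdering n)
    (G : Set (FreeAlg R n)) (I : TwoSidedIdeal (FreeAlg R n)) : Prop :=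
  (∀ g ∈ G, g ∈ I) ∧ IsMonicSet o G ∧
    ∀ f : FreeAlg R n, f ∈ I → f ≠ 0 → ∃ g ∈ G, WordDvd (LM o g) (LM o f)

/-- The word `u` viewed as a monomial (with coefficient `1`) of the free algebra. -/
noncomputable def mono (R : Type) [CommRing R] {n : ℕ} (u : Word n) : FreeAlg R n :=
  MonoidAlgebra.single u 1

/-- `f` has a Gröbner representation `f = Σ_{i} λ_i u_i g_i v_i` with
`LM(u_i g_i v_i) ⪯ LM(f)` whenever `λ_i ≠ 0`. -/
def HasGroebnerRep {R : Type} [CommRing R] {n : ℕ} (o : MonomialOrdering n)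
    (G : Set (FreeAlg R n)) (f : FreeAlg R n) : Prop :=
  ∃ (m : ℕ) (lam : Fin m → R) (u v : Fin m → Word n) (g : Fin m → FreeAlg R n),
    (∀ i, g i ∈ G) ∧
    f = ∑ i, lam i • (mono R (u i) * g i * mono R (v i)) ∧
    ∀ i, lam i ≠ 0 → o.le (LM o (mono R (u i) * g i * mono R (v i))) (LM o f)

/-- The set `N(G)` of normal words (mod `G`): words divisible by no `LM(g)`, `g ∈ G`. -/
def NSet {R : Type} [CommRing R] {n : ℕ} (o : MonomialOrdering n)
    (G : Set (FreeAlg R n)) : Set (Word n) :=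
  {u : Word n | ∀ g ∈ G, ¬ WordDvd (LM o g) u}

/-- `f` is a normal element (mod `G`): every word occurring in `f` is normal. -/
def IsNormal {R : Type} [CommRing R] {n : ℕ} (o : MonomialOrdering n)
    (G : Set (FreeAlg R n)) (f : FreeAlg R n) : Prop :=
  ∀ u ∈ f.coeff.support, u ∈ NSet o G

/-- `G` is LM-reduced: `LM(g) ∤ LM(g')` for distinct `g, g' ∈ G`. -/
def LMReduced {R : Type} [CommRing R] {n : ℕ} (o : MonomialOrdering n)
    (G : Set (FreeAlg R n)) : Prop :=
  ∀ g ∈ G, ∀ g' ∈ G, g ≠ g' → ¬ WordDvd (LM o g) (LM o g')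

/-- An exhaustive `Γ`-filtration on a ring `S`, where `Γ` is a totally ordered
(not necessarily commutative) additive monoid: a family of additive subgroups
`F γ` of `S` with (F1) `S = ∪_γ F γ`, (F2) `F γ₁ ⊆ F γ₂` for `γ₁ < γ₂`,
(F3) `F γ · F τ ⊆ F (γ + τ)`, (F4) `1 ∈ F 0`. -/
structure RingFiltration (Γ : Type) [AddMonoid Γ] [LinearOrder Γ] (S : Type) [Ring S] where
  F : Γ → AddSubgroup S
  exhaustive : ∀ s : S, ∃ γ : Γ, s ∈ F γ
  mono : ∀ ⦃γ₁ γ₂ : Γ⦄, γ₁ < γ₂ → F γ₁ ≤ F γ₂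
  mul_mem : ∀ ⦃γ τ : Γ⦄ ⦃a b : S⦄, a ∈ F γ → b ∈ F τ → a * b ∈ F (γ + τ)
  one_mem : 1 ∈ F 0

/-- The quotient ring `A = R⟨X₁,...,Xₙ⟩/I` of the free algebra by a two-sided ideal `I`. -/
abbrev QuotAlg {R : Type} [CommRing R] {n : ℕ} (I : TwoSidedIdeal (FreeAlg R n)) : Type :=
  RingQuot (fun a b : FreeAlg R n => a - b ∈ I)

/-- The canonical projection `R⟨X₁,...,Xₙ⟩ → A = R⟨X⟩/I`. -/
noncomputable def quotProj {R : Type} [CommRing R] {n : ℕ}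
    (I : TwoSidedIdeal (FreeAlg R n)) : FreeAlg R n →+* QuotAlg I :=
  RingQuot.mkRingHom (fun a b : FreeAlg R n => a - b ∈ I)

/-- The `Γ`-filtration `F_γA = {Σᵢ λᵢ·w̄ᵢ : λᵢ ∈ F_γR, wᵢ ∈ N(G)}` on `A = R⟨X⟩/I`
induced by a filtration of `R` and the normal words mod `G`:  it is the additive subgroup of
`A` generated by the classes of the elements `λ·u` with `λ ∈ F_γR` and `u ∈ N(G)`. -/
noncomputable def inducedFiltration {Γ : Type} [AddMonoid Γ] [LinearOrder Γ]
    {R : Type} [CommRing R] {n : ℕ} (FR : RingFiltration Γ R) (o : MonomialOrdering n)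
    (G : Set (FreeAlg R n)) (I : TwoSidedIdeal (FreeAlg R n)) (γ : Γ) :
    AddSubgroup (QuotAlg I) :=
  AddSubgroup.closure
    {x : QuotAlg I | ∃ lam ∈ FR.F γ, ∃ u ∈ NSet o G,
      x = quotProj I (MonoidAlgebra.single u lam)}


section SeparatedAux

variable {R : Type} [CommRing R] {n : ℕ}

private lemma mo_trans (o : MonomialOrdering n) {a b c : Word n}
    (h1 : o.lt a b) (h2 : o.lt b c) : o.lt a c :=
  haveI := o.strictTotal
  IsTrans.trans a b c h1 h2

private lemma mo_exists_max (o : MonomialOrdering n) (s : Finset (Word n)) (hs : s.Nonempty) :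
    ∃ w ∈ s, ∀ u ∈ s, o.le u w := by
  haveI := o.strictTotal
  induction s using Finset.induction_on with
  | empty => exact absurd hs (by simp)
  | @insert a t ha ih =>
    rcases t.eq_empty_or_nonempty with rfl | htne
    · refine ⟨a, Finset.mem_insert_self a _, ?_⟩
      intro u hu
      rcases Finset.mem_insert.mp hu with rfl | h
      · exact Or.inl rfl
      · simp at h
    · obtain ⟨w, hw, hwmax⟩ := ih htne
      rcases trichotomous_of o.lt a w with h | h | h
      · refine ⟨w, Finset.mem_insert_of_mem hw, ?_⟩
        intro u hu
        rcases Finset.mem_insert.mp hu with rfl | h'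
        · exact Or.inr h
        · exact hwmax u h'
      · refine ⟨w, Finset.mem_insert_of_mem hw, ?_⟩
        intro u hu
        rcases Finset.mem_insert.mp hu with rfl | h'
        · exact Or.inl h
        · exact hwmax u h'
      · refine ⟨a, Finset.mem_insert_self a _, ?_⟩
        intro u hu
        rcases Finset.mem_insert.mp hu with rfl | h'
        · exact Or.inl rfl
        · rcases hwmax u h' with rfl | h''
          · exact Or.inr h
          · exact Or.inr (mo_trans o h'' h)

private lemma LM_spec (o : MonomialOrdering n) {f : FreeAlg R n} (hf : f ≠ 0) :
    LM o f ∈ f.coeff.support ∧ ∀ u ∈ f.coeff.support, o.le u (LM o f) := by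
  have hex : ∃ w, w ∈ f.coeff.support ∧ ∀ u ∈ f.coeff.support, o.le u w := by
    obtain ⟨w, hw, hmax⟩ := mo_exists_max o f.coeff.support
      (Finsupp.support_nonempty_iff.mpr (mt MonoidAlgebra.coeff_eq_zero.mp hf))
    exact ⟨w, hw, hmax⟩
  rw [LM, dif_pos hex]
  exact hex.choose_spec

private lemma mono_mul_mono (w s : Word n) (f : FreeAlg R n) :
    (mono R w * f * mono R s).coeff = Finsupp.mapDomain (fun v => w * v * s) f.coeff := by
  induction f using MonoidAlgebra.induction with
  | zero => simp [mono]
  | single_add a b f _ _ ih =>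
    have h1 : (mono R w) * (MonoidAlgebra.single a b) * (mono R s)
        = MonoidAlgebra.single (w * a * s) b := by
      simp only [mono, MonoidAlgebra.single_mul_single, one_mul, mul_one]
    simp only [mul_add, add_mul, MonoidAlgebra.coeff_add, ih, h1, MonoidAlgebra.coeff_single,
      Finsupp.mapDomain_add, Finsupp.mapDomain_single]

private lemma conj_inj (w s : Word n) : Function.Injective (fun v : Word n => w * v * s) := by
  intro a b h
  simp only at h
  exact mul_left_cancel (mul_right_cancel h)

private lemma reduce (o : MonomialOrdering n) (G : Set (FreeAlg R n))
    (I : TwoSidedIdeal (FreeAlg R n)) (hGI : ∀ g ∈ G, g ∈ I) (hM : IsMonicSet o G)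
    (f : FreeAlg R n) : ∃ h : FreeAlg R n, IsNormal o G h ∧ f - h ∈ I := by
  classical
  haveI := o.strictTotal
  have main : ∀ u : Word n, ∀ f : FreeAlg R n,
      (∀ v ∈ f.coeff.support, v ∉ NSet o G → o.le v u) →
      ∃ h : FreeAlg R n, IsNormal o G h ∧ f - h ∈ I := by
    intro u
    refine o.wellFounded.induction (C := fun u => ∀ f : FreeAlg R n,
      (∀ v ∈ f.coeff.support, v ∉ NSet o G → o.le v u) →
      ∃ h : FreeAlg R n, IsNormal o G h ∧ f - h ∈ I) u ?_
    clear u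
    intro u ih f hf
    by_cases hn : IsNormal o G f
    · exact ⟨f, hn, by rw [sub_self]; exact I.zero_mem⟩
    have hex : ∃ v ∈ f.coeff.support, v ∉ NSet o G := by
      unfold IsNormal at hn; push_neg at hn; exact hn
    obtain ⟨v0, hv0s, hv0n⟩ := hex
    have hTne : (f.coeff.support.filter (fun v => v ∉ NSet o G)).Nonempty :=
      ⟨v0, Finset.mem_filter.mpr ⟨hv0s, hv0n⟩⟩
    obtain ⟨u₀, hu₀T, hu₀max⟩ := mo_exists_max o _ hTne
    have hu₀s : u₀ ∈ f.coeff.support := (Finset.mem_filter.mp hu₀T).1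
    have hu₀n : u₀ ∉ NSet o G := (Finset.mem_filter.mp hu₀T).2
    have hu₀le : o.le u₀ u := hf u₀ hu₀s hu₀n
    have hdvd : ∃ g ∈ G, WordDvd (LM o g) u₀ := by
      by_contra hcon
      push_neg at hcon
      exact hu₀n (fun g hg => hcon g hg)
    obtain ⟨g, hgG, w, s, hws⟩ := hdvd
    have hg0 : g ≠ 0 := (hM g hgG).1
    have hLC : g.coeff (LM o g) = 1 := (hM g hgG).2
    set q : FreeAlg R n := mono R w * g * mono R s with hq
    have hq_eq : q.coeff = Finsupp.mapDomain (fun v => w * v * s) g.coeff := mono_mul_mono w s g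
    have hqI : (f.coeff u₀) • q ∈ I := by
      have h1 : q ∈ I := I.mul_mem_right _ _ (I.mul_mem_left _ _ (hGI g hgG))
      rw [Algebra.smul_def]
      exact I.mul_mem_left _ _ h1
    have hqu : q.coeff u₀ = 1 := by
      rw [hws, hq_eq]
      have h2 := Finsupp.mapDomain_apply (conj_inj w s) g.coeff (LM o g)
      simpa using h2.trans hLC
    set f' := f - (f.coeff u₀) • q with hf'
    have hff' : f - f' ∈ I := by
      have h3 : f - f' = (f.coeff u₀) • q := by rw [hf', sub_sub_cancel]
      rw [h3]; exact hqI
    have hf'u₀ : f'.coeff u₀ = 0 := by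
      rw [hf', MonoidAlgebra.coeff_sub, MonoidAlgebra.coeff_smul, Finsupp.sub_apply, Finsupp.smul_apply, hqu, smul_eq_mul, mul_one, sub_self]
    have hsub : f'.coeff.support ⊆ f.coeff.support ∪ ((f.coeff u₀) • q).coeff.support := by
      rw [hf', MonoidAlgebra.coeff_sub]; exact Finsupp.support_sub
    have hbound : ∀ v ∈ f'.coeff.support, v ∉ NSet o G → o.lt v u₀ := by
      intro v hv hvn
      have hvne : v ≠ u₀ := fun h => (Finsupp.mem_support_iff.mp hv) (h ▸ hf'u₀)
      rcases Finset.mem_union.mp (hsub hv) with hvf | hvq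
      · rcases hu₀max v (Finset.mem_filter.mpr ⟨hvf, hvn⟩) with h | h
        · exact absurd h hvne
        · exact h
      · have hvq' : v ∈ q.coeff.support := by
            rw [MonoidAlgebra.coeff_smul] at hvq; exact Finsupp.support_smul hvq
        rw [hq_eq] at hvq'
        obtain ⟨v', hv's, hv'eq⟩ := Finset.mem_image.mp (Finsupp.mapDomain_support hvq')
        have hv'ne : v' ≠ LM o g := by
          rintro rfl
          exact hvne (by rw [← hv'eq, hws])
        have hv'lt : o.lt v' (LM o g) := by
          rcases (LM_spec o hg0).2 v' hv's with h | h
          · exact absurd h hv'ne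
          · exact h
        rw [hws, ← hv'eq]
        exact o.mul_compat w v' (LM o g) s hv'lt
    by_cases hn' : IsNormal o G f'
    · exact ⟨f', hn', hff'⟩
    have hex' : ∃ v ∈ f'.coeff.support, v ∉ NSet o G := by
      unfold IsNormal at hn'; push_neg at hn'; exact hn'
    obtain ⟨v1, hv1s, hv1n⟩ := hex'
    have hT'ne : (f'.coeff.support.filter (fun v => v ∉ NSet o G)).Nonempty :=
      ⟨v1, Finset.mem_filter.mpr ⟨hv1s, hv1n⟩⟩
    obtain ⟨u₁, hu₁T, hu₁max⟩ := mo_exists_max o _ hT'ne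
    have hu₁lt : o.lt u₁ u₀ :=
      hbound u₁ (Finset.mem_filter.mp hu₁T).1 (Finset.mem_filter.mp hu₁T).2
    have hu₁ltu : o.lt u₁ u := by
      rcases hu₀le with rfl | h
      · exact hu₁lt
      · exact mo_trans o hu₁lt h
    obtain ⟨h, hhn, hhI⟩ := ih u₁ hu₁ltu f'
      (fun v hv hvn => hu₁max v (Finset.mem_filter.mpr ⟨hv, hvn⟩))
    refine ⟨h, hhn, ?_⟩
    have h4 := I.add_mem hff' hhI
    rwa [sub_add_sub_cancel] at h4
  by_cases hn : IsNormal o G f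
  · exact ⟨f, hn, by rw [sub_self]; exact I.zero_mem⟩
  have hex : ∃ v ∈ f.coeff.support, v ∉ NSet o G := by
    unfold IsNormal at hn; push_neg at hn; exact hn
  obtain ⟨v0, hv0s, hv0n⟩ := hex
  have hTne : (f.coeff.support.filter (fun v => v ∉ NSet o G)).Nonempty :=
    ⟨v0, Finset.mem_filter.mpr ⟨hv0s, hv0n⟩⟩
  obtain ⟨u₀, hu₀T, hu₀max⟩ := mo_exists_max o _ hTne
  exact main u₀ f (fun v hv hvn => hu₀max v (Finset.mem_filter.mpr ⟨hv, hvn⟩))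

private lemma proj_eq_of_sub_mem {I : TwoSidedIdeal (FreeAlg R n)} {f f' : FreeAlg R n}
    (h : f - f' ∈ I) : quotProj I f = quotProj I f' :=
  RingQuot.mkRingHom_rel h

private lemma sub_mem_of_proj_eq {I : TwoSidedIdeal (FreeAlg R n)} {f f' : FreeAlg R n}
    (h : quotProj I f = quotProj I f') : f - f' ∈ I := by
  have hresp : ∀ ⦃x y : FreeAlg R n⦄, (fun a b => a - b ∈ I) x y →
      I.ringCon.mk' x = I.ringCon.mk' y := by
    intro x y hxy
    exact (RingCon.eq I.ringCon).mpr ((I.rel_iff x y).mpr hxy)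
  have h2 := congrArg (RingQuot.lift ⟨I.ringCon.mk', hresp⟩) h
  rw [quotProj, RingQuot.lift_mkRingHom_apply, RingQuot.lift_mkRingHom_apply] at h2
  exact (I.rel_iff f f').mp ((RingCon.eq I.ringCon).mp h2)

private lemma mem_filtration_repr {Γ : Type} [AddMonoid Γ] [LinearOrder Γ]
    (FR : RingFiltration Γ R) (o : MonomialOrdering n) (G : Set (FreeAlg R n))
    (I : TwoSidedIdeal (FreeAlg R n)) {γ : Γ} {a : QuotAlg I}
    (ha : a ∈ inducedFiltration FR o G I γ) :
    ∃ f : FreeAlg R n, IsNormal o G f ∧ (∀ u : Word n, f.coeff u ∈ FR.F γ) ∧ a = quotProj I f := by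
  refine AddSubgroup.closure_induction ?_ ?_ ?_ ?_ ha
  · rintro x ⟨lam, hlam, u, hu, rfl⟩
    refine ⟨MonoidAlgebra.single u lam, ?_, ?_, rfl⟩
    · intro v hv
      have hv1 : v = u := Finset.mem_singleton.mp (Finsupp.support_single_subset hv)
      subst hv1
      exact hu
    · intro v
      rw [MonoidAlgebra.coeff_single, Finsupp.single_apply]
      split
      · exact hlam
      · exact (FR.F γ).zero_mem
  · refine ⟨0, ?_, ?_, (map_zero _).symm⟩
    · intro u hu; simp at hu
    · intro u; rw [MonoidAlgebra.coeff_zero, Finsupp.zero_apply]; exact (FR.F γ).zero_mem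
  · rintro x y hx hy ⟨f₁, h1n, h1c, rfl⟩ ⟨f₂, h2n, h2c, rfl⟩
    refine ⟨f₁ + f₂, ?_, ?_, (map_add _ _ _).symm⟩
    · intro u hu
      classical
      rw [MonoidAlgebra.coeff_add] at hu
      rcases Finset.mem_union.mp (Finsupp.support_add hu) with h | h
      · exact h1n u h
      · exact h2n u h
    · intro u
      rw [MonoidAlgebra.coeff_add, Finsupp.add_apply]
      exact (FR.F γ).add_mem (h1c u) (h2c u)
  · rintro x hx ⟨f₁, h1n, h1c, rfl⟩
    refine ⟨-f₁, ?_, ?_, (map_neg _ _).symm⟩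
    · intro u hu
      rw [MonoidAlgebra.coeff_neg, Finsupp.support_neg] at hu
      exact h1n u hu
    · intro u
      rw [MonoidAlgebra.coeff_neg, Finsupp.neg_apply]
      exact (FR.F γ).neg_mem (h1c u)

end SeparatedAux

/-- **Theorem 4.1.**  With `R`, `FR`, `G ⊆ R₀⟨X⟩` a monic Gröbner basis of `I = ⟨G⟩`
(`LM(g) ≠ 1` for all `g ∈ G`) as in Theorem 3.1, endow `A = R⟨X⟩/I` with the induced
`Γ`-filtration `FA`.  If `FR` is separated then `FA` is separated: every nonzero `a ∈ A`
lies in `F_γA − F_{<γ}A` for some `γ ∈ Γ`.  In particular, if `1 ∈ F₀R − F_{<0}R` then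
`1 ∈ F₀A − F_{<0}A`. -/
theorem induced_filtration_separated {Γ : Type} [AddMonoid Γ] [LinearOrder Γ]
    {R : Type} [CommRing R] {n : ℕ} (FR : RingFiltration Γ R) (o : MonomialOrdering n)
    (G : Set (FreeAlg R n)) (I : TwoSidedIdeal (FreeAlg R n))
    (hG0 : ∀ g ∈ G, ∀ u : Word n, g.coeff u ∈ FR.F 0)
    (hgen : I = TwoSidedIdeal.span G) (hGB : IsMonicGB o G I)
    (hLM1 : ∀ g ∈ G, LM o g ≠ 1)
    (hsep : ∀ lam : R, lam ≠ 0 → ∃ γ : Γ, lam ∈ FR.F γ ∧ ∀ γ' < γ, lam ∉ FR.F γ') :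
    (∀ a : QuotAlg I, a ≠ 0 → ∃ γ : Γ, a ∈ inducedFiltration FR o G I γ ∧
        ∀ γ' < γ, a ∉ inducedFiltration FR o G I γ') ∧
    (((1 : R) ∈ FR.F 0 ∧ ∀ γ' < (0 : Γ), (1 : R) ∉ FR.F γ') →
      ((1 : QuotAlg I) ∈ inducedFiltration FR o G I 0 ∧
        ∀ γ' < (0 : Γ), (1 : QuotAlg I) ∉ inducedFiltration FR o G I γ')) := by
  classical
  obtain ⟨hGI, hM, hGBdvd⟩ := hGB
  have normal_zero : ∀ f : FreeAlg R n, f ∈ I → IsNormal o G f → f = 0 := by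
    intro f hfI hfn
    by_contra hf
    obtain ⟨g, hgG, hdvd⟩ := hGBdvd f hfI hf
    exact (hfn (LM o f) (LM_spec o hf).1) g hgG hdvd
  have normal_inj : ∀ f f' : FreeAlg R n, IsNormal o G f → IsNormal o G f' →
      quotProj I f = quotProj I f' → f = f' := by
    intro f f' hfn hf'n hq
    have hsub : f - f' ∈ I := sub_mem_of_proj_eq hq
    have hnrm : IsNormal o G (f - f') := by
      intro u hu
      rw [MonoidAlgebra.coeff_sub] at hu
      rcases Finset.mem_union.mp (Finsupp.support_sub hu) with h | h
      · exact hfn u h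
      · exact hf'n u h
    exact sub_eq_zero.mp (normal_zero _ hsub hnrm)
  constructor
  · intro a ha
    obtain ⟨f, hfa⟩ : ∃ f, quotProj I f = a := RingQuot.mkRingHom_surjective _ a
    obtain ⟨h, hhn, hhI⟩ := reduce o G I hGI hM f
    have haq : a = quotProj I h := by rw [← hfa]; exact proj_eq_of_sub_mem hhI
    have hh0 : h ≠ 0 := by
      rintro rfl
      exact ha (by rw [haq, map_zero])
    have hspec : ∀ u ∈ h.coeff.support, ∃ γ : Γ, h.coeff u ∈ FR.F γ ∧ ∀ γ' < γ, h.coeff u ∉ FR.F γ' :=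
      fun u hu => hsep (h.coeff u) (Finsupp.mem_support_iff.mp hu)
    choose! γf hγf1 hγf2 using hspec
    have hSne : (h.coeff.support.image γf).Nonempty :=
      (Finsupp.support_nonempty_iff.mpr (mt MonoidAlgebra.coeff_eq_zero.mp hh0)).image γf
    set γ := (h.coeff.support.image γf).max' hSne with hγ
    refine ⟨γ, ?_, ?_⟩
    · rw [haq]
      have hrep := (MonoidAlgebra.sum_coeff_single h).symm
      rw [Finsupp.sum] at hrep
      rw [hrep, map_sum]
      refine AddSubgroup.sum_mem _ ?_
      intro u hu
      refine AddSubgroup.subset_closure ⟨h.coeff u, ?_, u, hhn u hu, rfl⟩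
      have hle : γf u ≤ γ := Finset.le_max' _ _ (Finset.mem_image_of_mem γf hu)
      rcases eq_or_lt_of_le hle with heq | hlt'
      · exact heq ▸ hγf1 u hu
      · exact FR.mono hlt' (hγf1 u hu)
    · intro γ' hγ' hmem
      obtain ⟨f', hf'n, hf'c, hf'a⟩ := mem_filtration_repr FR o G I hmem
      have heq : h = f' := normal_inj h f' hhn hf'n (by rw [← haq, hf'a])
      obtain ⟨u₀, hu₀s, hu₀γ⟩ := Finset.mem_image.mp (Finset.max'_mem _ hSne)
      refine hγf2 u₀ hu₀s γ' (by rw [hu₀γ]; exact hγ') ?_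
      rw [heq]
      exact hf'c u₀
  · rintro ⟨h0, hlt⟩
    have h1N : (1 : Word n) ∈ NSet o G := by
      intro g hg hdvd
      obtain ⟨w, s, hws⟩ := hdvd
      apply hLM1 g hg
      have hlen := congrArg FreeMonoid.length hws
      rw [FreeMonoid.length_mul, FreeMonoid.length_mul] at hlen
      have h1 : FreeMonoid.length (1 : Word n) = 0 := FreeMonoid.length_eq_zero.mpr rfl
      rw [h1] at hlen
      exact FreeMonoid.length_eq_zero.mp (by omega)
    have h1norm : IsNormal o G (MonoidAlgebra.single (1 : Word n) (1 : R)) := by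
      intro u hu
      have hv1 : u = 1 := Finset.mem_singleton.mp (Finsupp.support_single_subset hu)
      subst hv1
      exact h1N
    have h1A : (1 : QuotAlg I) = quotProj I (MonoidAlgebra.single (1 : Word n) (1 : R)) := by
      rw [← MonoidAlgebra.one_def, map_one]
    constructor
    · rw [h1A]
      exact AddSubgroup.subset_closure ⟨1, h0, 1, h1N, rfl⟩
    · intro γ' hγ' hmem
      obtain ⟨f', hf'n, hf'c, hf'a⟩ := mem_filtration_repr FR o G I hmem
      have heq : MonoidAlgebra.single (1 : Word n) (1 : R) = f' :=
        normal_inj _ _ h1norm hf'n (by rw [← h1A, hf'a])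
      have hmem1 : (1 : R) ∈ FR.F γ' := by
        have h2 := hf'c (1 : Word n)
        rw [← heq, MonoidAlgebra.coeff_single, Finsupp.single_eq_same] at h2
        exact h2
      exact hlt γ' hγ' hmem1
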